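/- Let y₁, y₂ be words over Σ, # ∉ Σ, y₃ = y₁#y₂, ℓ > 0. Every word in MAW^ℓ(y₁) ∩ MAW^ℓ(y₂) belongs to MAW^ℓ(y₃). -/

import Mathlib

/-- `x` is a minimal absent word (MAW) of `y`: `x` is not a factor of `y`,
but every proper factor of `x` is a factor of `y`. -/
def MAW {α : Type*} (y x : List α) : Prop :=
  ¬ x <:+: y ∧ ∀ f : List α, f <:+: x → f ≠ x → f <:+: y

/-- MAW of length at most `ℓ`. -/
def MAWle {α : Type*} (ℓ : ℕ) (y x : List α) : Prop :=
  MAW y x ∧ x.length ≤ ℓ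

/-- Reduced set: MAWs of `u` (length ≤ ℓ) containing no MAW of `v` (length ≤ ℓ) as a factor. -/
def RMAW {α : Type*} (ℓ : ℕ) (u v x : List α) : Prop :=
  MAWle ℓ u x ∧ ∀ w : List α, MAWle ℓ v w → ¬ w <:+: x

theorem inter_maw_subset {α : Type*} (S : Set α) (hash : α)
    (hhash : hash ∉ S) (y₁ y₂ : List α)
    (hy₁ : ∀ a ∈ y₁, a ∈ S) (hy₂ : ∀ a ∈ y₂, a ∈ S)
    (ℓ : ℕ) (hℓ : 0 < ℓ) (x : List α) (hxS : ∀ a ∈ x, a ∈ S)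
    (h₁ : MAWle ℓ y₁ x) (h₂ : MAWle ℓ y₂ x) :
    MAWle ℓ (y₁ ++ hash :: y₂) x := by
  obtain ⟨⟨hna1, hf1⟩, hlen⟩ := h₁
  obtain ⟨⟨hna2, _⟩, _⟩ := h₂
  have hx : hash ∉ x := fun h => hhash (hxS _ h)
  refine ⟨⟨?_, ?_⟩, hlen⟩
  · rintro ⟨s, t, hst⟩
    rw [List.append_assoc] at hst
    rcases List.append_eq_append_iff.mp hst with ⟨a, ha1, ha2⟩ | ⟨c, hc1, hc2⟩
    · -- y₁ = s ++ a, x ++ t = a ++ hash :: y₂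
      rcases List.append_eq_append_iff.mp ha2 with ⟨b, hb1, hb2⟩ | ⟨d, hd1, hd2⟩
      · exact hna1 ⟨s, b, by rw [ha1, hb1, List.append_assoc]⟩
      · cases d with
        | nil => exact hna1 ⟨s, [], by rw [ha1, hd1]; simp⟩
        | cons h' d' =>
          have : h' = hash := (List.cons.injEq _ _ _ _ ▸ hd2).1.symm
          exact hx (hd1 ▸ (by simp [this] : hash ∈ a ++ h' :: d'))
    · -- s = y₁ ++ c, c ++ (x ++ t) = hash :: y₂
      rcases List.cons_eq_append_iff.mp hc2 with ⟨hc, hxt⟩ | ⟨c', hc', hy⟩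
      · rcases List.cons_eq_append_iff.mp hxt.symm with ⟨hx0, _⟩ | ⟨x', hx', _⟩
        · exact hna1 (hx0 ▸ (List.nil_infix : [] <:+: y₁) : x <:+: y₁)
        · exact hx (hx' ▸ (List.mem_cons_self : hash ∈ hash :: x'))
      · exact hna2 ⟨c', t, by rw [hy, List.append_assoc]⟩
  · intro f hfx hfne
    exact (hf1 f hfx hfne).trans ⟨[], hash :: y₂, by simp⟩
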